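/- Let N ≥ 2 and let Λ ⊂ ℤ² be a finite set written as a disjoint union of generations Λ = Λ₁ ∪ … ∪ Λ_N satisfying Properties II–VI. Let b : ℝ → ℂ^N solve the Toy Model System on ℂ^N. Define r : ℝ → (ℤ² → ℂ) by r_n(t) = b_j(t) for n ∈ Λ_j (1 ≤ j ≤ N) and r_n(t) = 0 for n ∉ Λ. Then r is a solution of the resonant system RFNLS, i.e. −i ∂_t r_n(t) = −r_n(t)|r_n(t)|² + Σ_{(n₁,n₂,n₃) ∈ Γ_res(n)} r_{n₁}(t) conj(r_{n₂}(t)) r_{n₃}(t) for every n ∈ ℤ² and t ∈ ℝ. -/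

import Mathlib

open scoped BigOperators ENNReal

noncomputable section

/-- The squared Euclidean length of a lattice point `n ∈ ℤ²`. -/
def nsq (n : ℤ × ℤ) : ℤ := n.1 ^ 2 + n.2 ^ 2

/-- The set `Γ(n)` of non-self interactions at frequency `n`. -/
def Gam (n : ℤ × ℤ) : Set ((ℤ × ℤ) × (ℤ × ℤ) × (ℤ × ℤ)) :=
  {p | p.1 - p.2.1 + p.2.2 = n ∧ p.1 ≠ n ∧ p.2.2 ≠ n}

/-- `ω₄ = |n₁|² − |n₂|² + |n₃|² − |n|²`. -/
def omega4 (n : ℤ × ℤ) (p : (ℤ × ℤ) × (ℤ × ℤ) × (ℤ × ℤ)) : ℤ :=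
  nsq p.1 - nsq p.2.1 + nsq p.2.2 - nsq n

/-- The set `Γ_res(n)` of resonant non-self interactions at frequency `n`. -/
def GamRes (n : ℤ × ℤ) : Set ((ℤ × ℤ) × (ℤ × ℤ) × (ℤ × ℤ)) :=
  {p | p ∈ Gam n ∧ omega4 n p = 0}

/-- The right-hand side of the resonant system `RFNLS`:
`−r_n |r_n|² + Σ_{Γ_res(n)} r_{n₁} conj(r_{n₂}) r_{n₃}`. -/
def resRHS (r : (ℤ × ℤ) → ℂ) (n : ℤ × ℤ) : ℂ :=
  -(r n * (‖r n‖ : ℂ) ^ 2) +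
    ∑' p : GamRes n, r (↑p : (ℤ × ℤ) × (ℤ × ℤ) × (ℤ × ℤ)).1 *
      (starRingEnd ℂ) (r (↑p : (ℤ × ℤ) × (ℤ × ℤ) × (ℤ × ℤ)).2.1) *
      r (↑p : (ℤ × ℤ) × (ℤ × ℤ) × (ℤ × ℤ)).2.2

/-- A rectangle in `ℤ²`: `n₁,n₃` and `n₂,n₄` are pairs of opposite vertices. -/
def IsRect (n₁ n₂ n₃ n₄ : ℤ × ℤ) : Prop :=
  n₁ - n₂ + n₃ - n₄ = 0 ∧ nsq n₁ - nsq n₂ + nsq n₃ - nsq n₄ = 0 ∧ n₂ ≠ n₁ ∧ n₂ ≠ n₃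

/-- A nuclear family connecting generation `j` to generation `j+1`:
the parents `n₁, n₃` lie in `Λ_j` and the children `n₂, n₄` lie in `Λ_{j+1}`. -/
def NukFam (Λgen : ℕ → Finset (ℤ × ℤ)) (j : ℕ) (n₁ n₂ n₃ n₄ : ℤ × ℤ) : Prop :=
  IsRect n₁ n₂ n₃ n₄ ∧ n₁ ∈ Λgen j ∧ n₃ ∈ Λgen j ∧ n₂ ∈ Λgen (j + 1) ∧ n₄ ∈ Λgen (j + 1)

/-- Membership in `Λ = Λ₁ ∪ … ∪ Λ_N`. -/
def InLam (N : ℕ) (Λgen : ℕ → Finset (ℤ × ℤ)) (n : ℤ × ℤ) : Prop :=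
  ∃ j, 1 ≤ j ∧ j ≤ N ∧ n ∈ Λgen j

/-- Property II (closure): if three vertices of a rectangle lie in `Λ`, so does the fourth. -/
def PropII (N : ℕ) (Λgen : ℕ → Finset (ℤ × ℤ)) : Prop :=
  ∀ n₁ n₂ n₃ n₄ : ℤ × ℤ, IsRect n₁ n₂ n₃ n₄ →
    ((InLam N Λgen n₁ ∧ InLam N Λgen n₂ ∧ InLam N Λgen n₃) ∨
     (InLam N Λgen n₁ ∧ InLam N Λgen n₂ ∧ InLam N Λgen n₄) ∨
     (InLam N Λgen n₁ ∧ InLam N Λgen n₃ ∧ InLam N Λgen n₄) ∨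
     (InLam N Λgen n₂ ∧ InLam N Λgen n₃ ∧ InLam N Λgen n₄)) →
    InLam N Λgen n₁ ∧ InLam N Λgen n₂ ∧ InLam N Λgen n₃ ∧ InLam N Λgen n₄

/-- Property III (existence and uniqueness of spouse and children). -/
def PropIII (N : ℕ) (Λgen : ℕ → Finset (ℤ × ℤ)) : Prop :=
  ∀ j, 1 ≤ j → j < N → ∀ n₁ ∈ Λgen j,
    ∃ n₂ n₃ n₄ : ℤ × ℤ, NukFam Λgen j n₁ n₂ n₃ n₄ ∧
      ∀ m₂ m₃ m₄ : ℤ × ℤ, NukFam Λgen j n₁ m₂ m₃ m₄ →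
        m₃ = n₃ ∧ ({m₂, m₄} : Set (ℤ × ℤ)) = {n₂, n₄}

/-- Property IV (existence and uniqueness of sibling and parents). -/
def PropIV (N : ℕ) (Λgen : ℕ → Finset (ℤ × ℤ)) : Prop :=
  ∀ j, 1 ≤ j → j < N → ∀ n₂ ∈ Λgen (j + 1),
    ∃ n₁ n₃ n₄ : ℤ × ℤ, NukFam Λgen j n₁ n₂ n₃ n₄ ∧
      ∀ m₁ m₃ m₄ : ℤ × ℤ, NukFam Λgen j m₁ n₂ m₃ m₄ →
        m₄ = n₄ ∧ ({m₁, m₃} : Set (ℤ × ℤ)) = {n₁, n₃}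

/-- Property V (nondegeneracy): the sibling of a frequency is never its spouse. -/
def PropV (Λgen : ℕ → Finset (ℤ × ℤ)) : Prop :=
  ∀ (j j' : ℕ) (n c₁ sp c₂ p₁ p₂ sib : ℤ × ℤ),
    NukFam Λgen j n c₁ sp c₂ → NukFam Λgen j' p₁ n p₂ sib → sib ≠ sp

/-- Property VI (faithfulness): the only rectangles in `Λ` are the nuclear families. -/
def PropVI (N : ℕ) (Λgen : ℕ → Finset (ℤ × ℤ)) : Prop :=
  ∀ n₁ n₂ n₃ n₄ : ℤ × ℤ, InLam N Λgen n₁ → InLam N Λgen n₂ → InLam N Λgen n₃ →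
    InLam N Λgen n₄ → IsRect n₁ n₂ n₃ n₄ →
    ∃ j, NukFam Λgen j n₁ n₂ n₃ n₄ ∨ NukFam Λgen j n₂ n₁ n₄ n₃

/-- The right-hand side of the Toy Model System (with `b 0 = 0` by convention). -/
def toyRHS (b : ℕ → ℂ) (j : ℕ) : ℂ :=
  -Complex.I * (‖b j‖ : ℂ) ^ 2 * b j +
    2 * Complex.I * (starRingEnd ℂ) (b j) * (b (j - 1) ^ 2 + b (j + 1) ^ 2)

/-- `b` solves the Toy Model System on `ℂ^N` (encoded as `b : ℝ → ℕ → ℂ` vanishing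
outside indices `1,…,N`, so that `b₀ = b_{N+1} = 0` automatically). -/
def IsToySol (N : ℕ) (b : ℝ → ℕ → ℂ) : Prop :=
  (∀ t, b t 0 = 0) ∧ (∀ t, ∀ j, N < j → b t j = 0) ∧
    ∀ j, 1 ≤ j → j ≤ N → ∀ t, HasDerivAt (fun s => b s j) (toyRHS (b t) j) t

private lemma sq2_zero {a c : ℤ} (h : a ^ 2 + c ^ 2 = 0) : a = 0 ∧ c = 0 := by
  have ha : a ^ 2 = 0 := le_antisymm (by nlinarith [sq_nonneg c]) (sq_nonneg a)
  have hc : c ^ 2 = 0 := by linarith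
  exact ⟨pow_eq_zero_iff two_ne_zero |>.mp ha, pow_eq_zero_iff two_ne_zero |>.mp hc⟩

private lemma par_law {a1 a2 b1 b2 c1 c2 : ℤ} (h1 : 2 * a1 = b1 + c1) (h2 : 2 * a2 = b2 + c2)
    (h3 : 2 * (a1 ^ 2 + a2 ^ 2) = b1 ^ 2 + b2 ^ 2 + (c1 ^ 2 + c2 ^ 2)) :
    b1 = a1 ∧ b2 = a2 := by
  have hc1 : c1 = 2 * a1 - b1 := by linarith
  have hc2 : c2 = 2 * a2 - b2 := by linarith
  subst hc1 hc2
  have h4 : 2 * ((b1 - a1) ^ 2 + (b2 - a2) ^ 2) = 0 := by linear_combination -h3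
  have h5 : (b1 - a1) ^ 2 + (b2 - a2) ^ 2 = 0 := by linarith
  obtain ⟨e1, e2⟩ := sq2_zero h5
  exact ⟨by linarith, by linarith⟩

private lemma rect_comps {n₁ n₂ n₃ n₄ : ℤ × ℤ} (h : n₁ - n₂ + n₃ - n₄ = 0) :
    n₁.1 - n₂.1 + n₃.1 - n₄.1 = 0 ∧ n₁.2 - n₂.2 + n₃.2 - n₄.2 = 0 :=
  ⟨by simpa using congrArg Prod.fst h, by simpa using congrArg Prod.snd h⟩

private lemma rect_distinct {n₁ n₂ n₃ n₄ : ℤ × ℤ} (h : IsRect n₁ n₂ n₃ n₄) :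
    n₁ ≠ n₃ ∧ n₂ ≠ n₄ ∧ n₄ ≠ n₁ ∧ n₄ ≠ n₃ := by
  obtain ⟨hl, hq, h21, h23⟩ := h
  obtain ⟨hx, hy⟩ := rect_comps hl
  simp only [nsq] at hq
  refine ⟨?_, ?_, ?_, ?_⟩
  · intro e
    subst e
    obtain ⟨f1, f2⟩ := par_law (a1 := n₁.1) (a2 := n₁.2) (b1 := n₂.1) (b2 := n₂.2)
      (c1 := n₄.1) (c2 := n₄.2) (by linarith) (by linarith) (by linarith)
    exact h21 (Prod.ext f1 f2)
  · intro e
    subst e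
    obtain ⟨f1, f2⟩ := par_law (a1 := n₂.1) (a2 := n₂.2) (b1 := n₁.1) (b2 := n₁.2)
      (c1 := n₃.1) (c2 := n₃.2) (by linarith) (by linarith) (by linarith)
    exact h21 (Prod.ext f1.symm f2.symm)
  · intro e
    subst e
    exact h23 (Prod.ext (by linarith) (by linarith)).symm
  · intro e
    subst e
    exact h21 (Prod.ext (by linarith) (by linarith))

private lemma isRect_swap24 {n₁ n₂ n₃ n₄ : ℤ × ℤ} (h : IsRect n₁ n₂ n₃ n₄) :
    IsRect n₁ n₄ n₃ n₂ := by
  obtain ⟨d13, d24, d41, d43⟩ := rect_distinct h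
  obtain ⟨hl, hq, h21, h23⟩ := h
  exact ⟨by linear_combination hl, by linarith, d41, d43⟩

private lemma isRect_swap13 {n₁ n₂ n₃ n₄ : ℤ × ℤ} (h : IsRect n₁ n₂ n₃ n₄) :
    IsRect n₃ n₂ n₁ n₄ := by
  obtain ⟨hl, hq, h21, h23⟩ := h
  exact ⟨by linear_combination hl, by linarith, h23, h21⟩

private lemma nukFam_swap24 {Λgen : ℕ → Finset (ℤ × ℤ)} {j : ℕ} {n₁ n₂ n₃ n₄ : ℤ × ℤ}
    (h : NukFam Λgen j n₁ n₂ n₃ n₄) : NukFam Λgen j n₁ n₄ n₃ n₂ :=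
  ⟨isRect_swap24 h.1, h.2.1, h.2.2.1, h.2.2.2.2, h.2.2.2.1⟩

private lemma nukFam_swap13 {Λgen : ℕ → Finset (ℤ × ℤ)} {j : ℕ} {n₁ n₂ n₃ n₄ : ℤ × ℤ}
    (h : NukFam Λgen j n₁ n₂ n₃ n₄) : NukFam Λgen j n₃ n₂ n₁ n₄ :=
  ⟨isRect_swap13 h.1, h.2.2.1, h.2.1, h.2.2.2.1, h.2.2.2.2⟩

private lemma mem_gamRes {n p₁ p₂ p₃ : ℤ × ℤ} (h1 : p₁ - p₂ + p₃ = n) (h2 : p₁ ≠ n)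
    (h3 : p₃ ≠ n) (h4 : nsq p₁ - nsq p₂ + nsq p₃ - nsq n = 0) :
    ((p₁, p₂, p₃) : (ℤ × ℤ) × (ℤ × ℤ) × (ℤ × ℤ)) ∈ GamRes n :=
  ⟨⟨h1, h2, h3⟩, h4⟩

private lemma tsum_set_eq_sum {β : Type*} [DecidableEq β] (s : Set β) (f : β → ℂ)
    (S : Finset β) (hS : ∀ p ∈ S, p ∈ s) (h0 : ∀ p ∈ s, p ∉ S → f p = 0) :
    ∑' p : s, f ↑p = ∑ p ∈ S, f p := by
  rw [tsum_subtype]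
  rw [tsum_eq_sum (s := S) (f := s.indicator f) ?_]
  · exact Finset.sum_congr rfl fun p hp => Set.indicator_of_mem (hS p hp) f
  · intro p hp
    by_cases hmem : p ∈ s
    · rw [Set.indicator_of_mem hmem]; exact h0 p hmem hp
    · exact Set.indicator_of_notMem hmem f

/-- A solution of the Toy Model System spread over a frequency set `Λ` with
Properties II–VI yields a solution of the resonant system `RFNLS`. -/
theorem stmt4 (N : ℕ) (hN : 2 ≤ N) (Λgen : ℕ → Finset (ℤ × ℤ))
    (hempty : ∀ j, j = 0 ∨ N < j → Λgen j = ∅)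
    (hdisj : ∀ j k, j ≠ k → Disjoint (Λgen j) (Λgen k))
    (hII : PropII N Λgen) (hIII : PropIII N Λgen) (hIV : PropIV N Λgen)
    (hV : PropV Λgen) (hVI : PropVI N Λgen)
    (b : ℝ → ℕ → ℂ) (hb : IsToySol N b)
    (r : ℝ → (ℤ × ℤ) → ℂ)
    (hr : ∀ (t : ℝ) (j : ℕ) (n : ℤ × ℤ), 1 ≤ j → j ≤ N → n ∈ Λgen j → r t n = b t j)
    (hr0 : ∀ (t : ℝ) (n : ℤ × ℤ), (∀ j, n ∉ Λgen j) → r t n = 0) :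
    ∀ (n : ℤ × ℤ) (t : ℝ),
      HasDerivAt (fun s => r s n) (Complex.I * resRHS (r t) n) t := by
  classical
  obtain ⟨hb0, hbN, hbderiv⟩ := hb
  have hgen : ∀ {jj : ℕ} {m : ℤ × ℤ}, m ∈ Λgen jj → 1 ≤ jj ∧ jj ≤ N := by
    intro jj m hm
    by_contra hc
    rw [hempty jj (by omega)] at hm
    exact absurd hm (Finset.notMem_empty m)
  have huniqgen : ∀ {jj kk : ℕ} {m : ℤ × ℤ}, m ∈ Λgen jj → m ∈ Λgen kk → jj = kk := by
    intro jj kk m hj hk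
    by_contra hne
    exact Finset.disjoint_left.mp (hdisj jj kk hne) hj hk
  have hInLam : ∀ {jj : ℕ} {m : ℤ × ℤ}, m ∈ Λgen jj → InLam N Λgen m :=
    fun {jj m} hm => ⟨jj, (hgen hm).1, (hgen hm).2, hm⟩
  have hrmem : ∀ (s : ℝ) {jj : ℕ} {m : ℤ × ℤ}, m ∈ Λgen jj → r s m = b s jj :=
    fun s {jj m} hm => hr s jj m (hgen hm).1 (hgen hm).2 hm
  intro n t
  have hrect_of : ∀ p₁ p₂ p₃ : ℤ × ℤ,
      ((p₁, p₂, p₃) : (ℤ × ℤ) × (ℤ × ℤ) × (ℤ × ℤ)) ∈ GamRes n → IsRect p₁ p₂ p₃ n := by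
    intro p₁ p₂ p₃ hp
    obtain ⟨⟨hlin, hne1, hne3⟩, hres⟩ := hp
    refine ⟨by rw [← hlin]; ring, hres, ?_, ?_⟩
    · intro e; exact hne3 (by rw [← hlin, e]; ring)
    · intro e; exact hne1 (by rw [← hlin, e]; ring)
  by_cases hnΛ : ∀ jj, n ∉ Λgen jj
  · -- n outside Λ : everything vanishes
    have hrn : ∀ s, r s n = 0 := fun s => hr0 s n hnΛ
    have hzero : ∀ p : GamRes n,
        r t (↑p : (ℤ × ℤ) × (ℤ × ℤ) × (ℤ × ℤ)).1 *
          (starRingEnd ℂ) (r t (↑p : (ℤ × ℤ) × (ℤ × ℤ) × (ℤ × ℤ)).2.1) *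
          r t (↑p : (ℤ × ℤ) × (ℤ × ℤ) × (ℤ × ℤ)).2.2 = 0 := by
      rintro ⟨⟨p₁, p₂, p₃⟩, hp⟩
      by_cases h1 : ∀ jj, p₁ ∉ Λgen jj
      · simp [hr0 t p₁ h1]
      by_cases h2 : ∀ jj, p₂ ∉ Λgen jj
      · simp [hr0 t p₂ h2]
      by_cases h3 : ∀ jj, p₃ ∉ Λgen jj
      · simp [hr0 t p₃ h3]
      exfalso
      push_neg at h1 h2 h3
      obtain ⟨j1, hj1m⟩ := h1; obtain ⟨j2, hj2m⟩ := h2; obtain ⟨j3, hj3m⟩ := h3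
      have hrect : IsRect p₁ p₂ p₃ n := hrect_of p₁ p₂ p₃ hp
      have hall := hII p₁ p₂ p₃ n hrect
        (Or.inl ⟨hInLam hj1m, hInLam hj2m, hInLam hj3m⟩)
      obtain ⟨jn, _, _, hjn⟩ := hall.2.2.2
      exact hnΛ jn hjn
    have hsum0 : (∑' p : GamRes n,
        r t (↑p : (ℤ × ℤ) × (ℤ × ℤ) × (ℤ × ℤ)).1 *
          (starRingEnd ℂ) (r t (↑p : (ℤ × ℤ) × (ℤ × ℤ) × (ℤ × ℤ)).2.1) *
          r t (↑p : (ℤ × ℤ) × (ℤ × ℤ) × (ℤ × ℤ)).2.2) = 0 :=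
      (tsum_congr hzero).trans tsum_zero
    have hres0 : resRHS (r t) n = 0 := by
      unfold resRHS
      rw [hrn t, hsum0]
      simp
    rw [hres0, mul_zero]
    have heq : (fun s => r s n) = fun _ => (0 : ℂ) := funext hrn
    rw [heq]
    exact hasDerivAt_const t 0
  · push_neg at hnΛ
    obtain ⟨j, hnj⟩ := hnΛ
    have hj1 : 1 ≤ j := (hgen hnj).1
    have hjN : j ≤ N := (hgen hnj).2
    have hchildJ : ∀ (j' : ℕ) (m₁ m₂ m₃ : ℤ × ℤ), NukFam Λgen j' m₁ m₂ m₃ n →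
        2 ≤ j ∧ j' = j - 1 := by
      intro j' m₁ m₂ m₃ hf
      have h1 := huniqgen hf.2.2.2.2 hnj
      have h2 := (hgen hf.2.1).1
      omega
    have hparJ : ∀ (j' : ℕ) (m₁ m₂ m₃ : ℤ × ℤ), NukFam Λgen j' m₂ m₁ n m₃ →
        j < N ∧ j' = j := by
      intro j' m₁ m₂ m₃ hf
      have h1 := huniqgen hf.2.2.1 hnj
      have h2 := (hgen hf.2.2.2.1).2
      omega
    have hclass : ∀ p₁ p₂ p₃ : ℤ × ℤ,
        ((p₁, p₂, p₃) : (ℤ × ℤ) × (ℤ × ℤ) × (ℤ × ℤ)) ∈ GamRes n →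
        r t p₁ * (starRingEnd ℂ) (r t p₂) * r t p₃ ≠ 0 →
        (∃ j', NukFam Λgen j' p₁ p₂ p₃ n) ∨ (∃ j', NukFam Λgen j' p₂ p₁ n p₃) := by
      intro p₁ p₂ p₃ hp hf
      have h1 : ∃ jj, p₁ ∈ Λgen jj := by
        by_contra hcon; push_neg at hcon
        exact hf (by simp [hr0 t p₁ hcon])
      have h2 : ∃ jj, p₂ ∈ Λgen jj := by
        by_contra hcon; push_neg at hcon
        exact hf (by simp [hr0 t p₂ hcon])
      have h3 : ∃ jj, p₃ ∈ Λgen jj := by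
        by_contra hcon; push_neg at hcon
        exact hf (by simp [hr0 t p₃ hcon])
      obtain ⟨j1, hj1m⟩ := h1; obtain ⟨j2, hj2m⟩ := h2; obtain ⟨j3, hj3m⟩ := h3
      have hrect : IsRect p₁ p₂ p₃ n := hrect_of p₁ p₂ p₃ hp
      have hall := hII p₁ p₂ p₃ n hrect
        (Or.inl ⟨hInLam hj1m, hInLam hj2m, hInLam hj3m⟩)
      obtain ⟨j', hcase⟩ := hVI p₁ p₂ p₃ n hall.1 hall.2.1 hall.2.2.1 hall.2.2.2 hrect
      exact hcase.elim (fun h => Or.inl ⟨j', h⟩) (fun h => Or.inr ⟨j', h⟩)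
    have HC : 2 ≤ j → ∃ pa pc sib : ℤ × ℤ,
        pa ∈ Λgen (j - 1) ∧ pc ∈ Λgen (j - 1) ∧ sib ∈ Λgen j ∧ pa ≠ pc ∧
        ((pa, sib, pc) : (ℤ × ℤ) × (ℤ × ℤ) × (ℤ × ℤ)) ∈ GamRes n ∧
        ((pc, sib, pa) : (ℤ × ℤ) × (ℤ × ℤ) × (ℤ × ℤ)) ∈ GamRes n ∧
        (∀ (j' : ℕ) (m₁ m₂ m₃ : ℤ × ℤ), NukFam Λgen j' m₁ m₂ m₃ n →
          ((m₁, m₂, m₃) : (ℤ × ℤ) × (ℤ × ℤ) × (ℤ × ℤ)) = (pa, sib, pc) ∨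
          ((m₁, m₂, m₃) : (ℤ × ℤ) × (ℤ × ℤ) × (ℤ × ℤ)) = (pc, sib, pa)) := by
      intro hj2
      obtain ⟨pa, pc, sib, hfam, huniq⟩ := hIV (j - 1) (by omega) (by omega) n
        (by rw [show j - 1 + 1 = j by omega]; exact hnj)
      have hpa : pa ∈ Λgen (j - 1) := hfam.2.1
      have hpc : pc ∈ Λgen (j - 1) := hfam.2.2.1
      have hsib : sib ∈ Λgen (j - 1 + 1) := hfam.2.2.2.2
      rw [show j - 1 + 1 = j by omega] at hsib
      have hpapc : pa ≠ pc := (rect_distinct hfam.1).1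
      have hpan : pa ≠ n := fun e => absurd (huniqgen (e ▸ hpa) hnj) (by omega)
      have hpcn : pc ≠ n := fun e => absurd (huniqgen (e ▸ hpc) hnj) (by omega)
      obtain ⟨hl, hq, _, _⟩ := hfam.1
      refine ⟨pa, pc, sib, hpa, hpc, hsib, hpapc,
        mem_gamRes (by linear_combination hl) hpan hpcn (by linarith),
        mem_gamRes (by linear_combination hl) hpcn hpan (by linarith), ?_⟩
      intro j' m₁ m₂ m₃ hf
      have hj' : j' = j - 1 := (hchildJ j' m₁ m₂ m₃ hf).2
      subst hj'
      obtain ⟨e4, eset⟩ := huniq m₁ m₃ m₂ (nukFam_swap24 hf)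
      have hm13 : m₁ ≠ m₃ := (rect_distinct hf.1).1
      have h1 : m₁ ∈ ({pa, pc} : Set (ℤ × ℤ)) := by
        rw [← eset]; exact Set.mem_insert _ _
      have h3 : m₃ ∈ ({pa, pc} : Set (ℤ × ℤ)) := by
        rw [← eset]; simp
      simp only [Set.mem_insert_iff, Set.mem_singleton_iff] at h1 h3
      rcases h1 with h1 | h1 <;> rcases h3 with h3 | h3
      · exact absurd (h1.trans h3.symm) hm13
      · left; rw [h1, h3, e4]
      · right; rw [h1, h3, e4]
      · exact absurd (h1.trans h3.symm) hm13
    have HP : j < N → ∃ c₁ sp c₂ : ℤ × ℤ,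
        c₁ ∈ Λgen (j + 1) ∧ c₂ ∈ Λgen (j + 1) ∧ sp ∈ Λgen j ∧ c₁ ≠ c₂ ∧
        ((c₁, sp, c₂) : (ℤ × ℤ) × (ℤ × ℤ) × (ℤ × ℤ)) ∈ GamRes n ∧
        ((c₂, sp, c₁) : (ℤ × ℤ) × (ℤ × ℤ) × (ℤ × ℤ)) ∈ GamRes n ∧
        (∀ (j' : ℕ) (m₁ m₂ m₃ : ℤ × ℤ), NukFam Λgen j' m₂ m₁ n m₃ →
          ((m₁, m₂, m₃) : (ℤ × ℤ) × (ℤ × ℤ) × (ℤ × ℤ)) = (c₁, sp, c₂) ∨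
          ((m₁, m₂, m₃) : (ℤ × ℤ) × (ℤ × ℤ) × (ℤ × ℤ)) = (c₂, sp, c₁)) := by
      intro hjlt
      obtain ⟨c₁, sp, c₂, hfam, huniq⟩ := hIII j hj1 hjlt n hnj
      have hc1 : c₁ ∈ Λgen (j + 1) := hfam.2.2.2.1
      have hc2 : c₂ ∈ Λgen (j + 1) := hfam.2.2.2.2
      have hsp : sp ∈ Λgen j := hfam.2.2.1
      have hc12 : c₁ ≠ c₂ := (rect_distinct hfam.1).2.1
      have hc1n : c₁ ≠ n := fun e => absurd (huniqgen (e ▸ hc1) hnj) (by omega)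
      have hc2n : c₂ ≠ n := fun e => absurd (huniqgen (e ▸ hc2) hnj) (by omega)
      obtain ⟨hl, hq, _, _⟩ := hfam.1
      refine ⟨c₁, sp, c₂, hc1, hc2, hsp, hc12,
        mem_gamRes (by linear_combination -hl) hc1n hc2n (by linarith),
        mem_gamRes (by linear_combination -hl) hc2n hc1n (by linarith), ?_⟩
      intro j' m₁ m₂ m₃ hf
      have hj' : j' = j := (hparJ j' m₁ m₂ m₃ hf).2
      subst hj'
      obtain ⟨e3, eset⟩ := huniq m₁ m₂ m₃ (nukFam_swap13 hf)
      have hm13 : m₁ ≠ m₃ := (rect_distinct hf.1).2.1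
      have h1 : m₁ ∈ ({c₁, c₂} : Set (ℤ × ℤ)) := by
        rw [← eset]; exact Set.mem_insert _ _
      have h3 : m₃ ∈ ({c₁, c₂} : Set (ℤ × ℤ)) := by
        rw [← eset]; simp
      simp only [Set.mem_insert_iff, Set.mem_singleton_iff] at h1 h3
      rcases h1 with h1 | h1 <;> rcases h3 with h3 | h3
      · exact absurd (h1.trans h3.symm) hm13
      · left; rw [h1, h3, e3]
      · right; rw [h1, h3, e3]
      · exact absurd (h1.trans h3.symm) hm13
    have hkey : Complex.I * resRHS (r t) n = toyRHS (b t) j := by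
      by_cases hj2 : 2 ≤ j
      · by_cases hjlt : j < N
        · -- middle generations
          obtain ⟨pa, pc, sib, hpa, hpc, hsib, hpapc, hg1, hg2, huC⟩ := HC hj2
          obtain ⟨c₁, sp, c₂, hc1, hc2, hsp, hc12, hg3, hg4, huP⟩ := HP hjlt
          have hd : ∀ x, x ∈ Λgen (j - 1) → ∀ y, y ∈ Λgen (j + 1) → x ≠ y := by
            intro x hx y hy e
            exact absurd (huniqgen (e ▸ hx) hy) (by omega)
          have hpac1 : pa ≠ c₁ := hd pa hpa c₁ hc1
          have hpac2 : pa ≠ c₂ := hd pa hpa c₂ hc2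
          have hpcc1 : pc ≠ c₁ := hd pc hpc c₁ hc1
          have hpcc2 : pc ≠ c₂ := hd pc hpc c₂ hc2
          have hsum : (∑' p : GamRes n,
              r t (↑p : (ℤ × ℤ) × (ℤ × ℤ) × (ℤ × ℤ)).1 *
                (starRingEnd ℂ) (r t (↑p : (ℤ × ℤ) × (ℤ × ℤ) × (ℤ × ℤ)).2.1) *
                r t (↑p : (ℤ × ℤ) × (ℤ × ℤ) × (ℤ × ℤ)).2.2) =
              ∑ p ∈ ({(pa, sib, pc), (pc, sib, pa), (c₁, sp, c₂), (c₂, sp, c₁)} :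
                  Finset ((ℤ × ℤ) × (ℤ × ℤ) × (ℤ × ℤ))),
                r t p.1 * (starRingEnd ℂ) (r t p.2.1) * r t p.2.2 := by
            apply tsum_set_eq_sum (GamRes n)
              (fun q => r t q.1 * (starRingEnd ℂ) (r t q.2.1) * r t q.2.2)
            · intro p hp
              simp only [Finset.mem_insert, Finset.mem_singleton] at hp
              rcases hp with rfl | rfl | rfl | rfl
              exacts [hg1, hg2, hg3, hg4]
            · rintro ⟨p₁, p₂, p₃⟩ hpmem hpS
              by_contra hf0
              rcases hclass p₁ p₂ p₃ hpmem hf0 with ⟨j', hfam⟩ | ⟨j', hfam⟩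
              · rcases huC j' p₁ p₂ p₃ hfam with e | e <;>
                  (apply hpS; rw [e]; simp)
              · rcases huP j' p₁ p₂ p₃ hfam with e | e <;>
                  (apply hpS; rw [e]; simp)
          unfold resRHS toyRHS
          rw [hsum]
          rw [Finset.sum_insert (by simp [Prod.ext_iff, hpapc, hpac1, hpac2]),
            Finset.sum_insert (by simp [Prod.ext_iff, hpcc1, hpcc2]),
            Finset.sum_insert (by simp [Prod.ext_iff, hc12]),
            Finset.sum_singleton]
          simp only [hrmem t hnj, hrmem t hpa, hrmem t hpc, hrmem t hsib,
            hrmem t hc1, hrmem t hc2, hrmem t hsp]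
          ring
        · -- last generation : j = N
          obtain ⟨pa, pc, sib, hpa, hpc, hsib, hpapc, hg1, hg2, huC⟩ := HC hj2
          have hbp : b t (j + 1) = 0 := hbN t (j + 1) (by omega)
          have hsum : (∑' p : GamRes n,
              r t (↑p : (ℤ × ℤ) × (ℤ × ℤ) × (ℤ × ℤ)).1 *
                (starRingEnd ℂ) (r t (↑p : (ℤ × ℤ) × (ℤ × ℤ) × (ℤ × ℤ)).2.1) *
                r t (↑p : (ℤ × ℤ) × (ℤ × ℤ) × (ℤ × ℤ)).2.2) =
              ∑ p ∈ ({(pa, sib, pc), (pc, sib, pa)} :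
                  Finset ((ℤ × ℤ) × (ℤ × ℤ) × (ℤ × ℤ))),
                r t p.1 * (starRingEnd ℂ) (r t p.2.1) * r t p.2.2 := by
            apply tsum_set_eq_sum (GamRes n)
              (fun q => r t q.1 * (starRingEnd ℂ) (r t q.2.1) * r t q.2.2)
            · intro p hp
              simp only [Finset.mem_insert, Finset.mem_singleton] at hp
              rcases hp with rfl | rfl
              exacts [hg1, hg2]
            · rintro ⟨p₁, p₂, p₃⟩ hpmem hpS
              by_contra hf0
              rcases hclass p₁ p₂ p₃ hpmem hf0 with ⟨j', hfam⟩ | ⟨j', hfam⟩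
              · rcases huC j' p₁ p₂ p₃ hfam with e | e <;>
                  (apply hpS; rw [e]; simp)
              · exact absurd (hparJ j' p₁ p₂ p₃ hfam).1 (by omega)
          unfold resRHS toyRHS
          rw [hsum]
          rw [Finset.sum_insert (by simp [Prod.ext_iff, hpapc]),
            Finset.sum_singleton]
          simp only [hrmem t hnj, hrmem t hpa, hrmem t hpc, hrmem t hsib, hbp]
          ring
      · -- first generation : j = 1
        have hjlt : j < N := by omega
        obtain ⟨c₁, sp, c₂, hc1, hc2, hsp, hc12, hg3, hg4, huP⟩ := HP hjlt
        have hbm : b t (j - 1) = 0 := by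
          rw [show j - 1 = 0 by omega]; exact hb0 t
        have hsum : (∑' p : GamRes n,
            r t (↑p : (ℤ × ℤ) × (ℤ × ℤ) × (ℤ × ℤ)).1 *
              (starRingEnd ℂ) (r t (↑p : (ℤ × ℤ) × (ℤ × ℤ) × (ℤ × ℤ)).2.1) *
              r t (↑p : (ℤ × ℤ) × (ℤ × ℤ) × (ℤ × ℤ)).2.2) =
            ∑ p ∈ ({(c₁, sp, c₂), (c₂, sp, c₁)} :
                Finset ((ℤ × ℤ) × (ℤ × ℤ) × (ℤ × ℤ))),
              r t p.1 * (starRingEnd ℂ) (r t p.2.1) * r t p.2.2 := by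
          apply tsum_set_eq_sum (GamRes n)
            (fun q => r t q.1 * (starRingEnd ℂ) (r t q.2.1) * r t q.2.2)
          · intro p hp
            simp only [Finset.mem_insert, Finset.mem_singleton] at hp
            rcases hp with rfl | rfl
            exacts [hg3, hg4]
          · rintro ⟨p₁, p₂, p₃⟩ hpmem hpS
            by_contra hf0
            rcases hclass p₁ p₂ p₃ hpmem hf0 with ⟨j', hfam⟩ | ⟨j', hfam⟩
            · exact absurd (hchildJ j' p₁ p₂ p₃ hfam).1 (by omega)
            · rcases huP j' p₁ p₂ p₃ hfam with e | e <;>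
                (apply hpS; rw [e]; simp)
        unfold resRHS toyRHS
        rw [hsum]
        rw [Finset.sum_insert (by simp [Prod.ext_iff, hc12]),
          Finset.sum_singleton]
        simp only [hrmem t hnj, hrmem t hc1, hrmem t hc2, hrmem t hsp, hbm]
        ring
    have hfun : (fun s => r s n) = fun s => b s j := funext fun s => hrmem s hnj
    rw [hfun, hkey]
    exact hbderiv j hj1 hjN t
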